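/- Fix integers m ≥ 2 and k with 1 ≤ k ≤ m. Then there is a bijection between the set of code words of length k over base dimension m and the set of increasing trees on the vertex set {0, 1, …, k}, where an increasing tree is a tree (connected acyclic graph) on {0, 1, …, k} in which every vertex v ≠ 0 has exactly one neighbor with a smaller label (equivalently, labels increase along every path moving away from the root 0). -/

import Mathlib

/-- A code word of length `k` over base dimension `m`: a sequence
`A 1, A 2, …, A k` of finite sets of integers, each contained in `{2, 3, …}`,
such that `A 1 = ∅`, for each `2 ≤ j ≤ k` we have `A j ⊆ A (j-1) ∪ {j}`,
and `|A j| ≤ m - 1` for all `j`.  (We normalize `A i = ∅` outside `1 ≤ i ≤ k`.) -/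
def IsCodeWord (m k : ℕ) (A : ℕ → Finset ℕ) : Prop :=
  A 1 = ∅ ∧
  (∀ i, 1 ≤ i → i ≤ k → ∀ x ∈ A i, 2 ≤ x) ∧
  (∀ j, 2 ≤ j → j ≤ k → A j ⊆ A (j - 1) ∪ {j}) ∧
  (∀ i, 1 ≤ i → i ≤ k → (A i).card ≤ m - 1) ∧
  (∀ i, i = 0 ∨ k < i → A i = ∅)

/-- `multCW k A j` is `n_j`: the number of indices `i` (with `1 ≤ i ≤ k`)
such that `j ∈ A i`. -/
def multCW (k : ℕ) (A : ℕ → Finset ℕ) (j : ℕ) : ℕ :=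
  ((Finset.Icc 1 k).filter (fun i => j ∈ A i)).card

/-- An increasing tree on the vertex set `{0, 1, …, k}` (as `Fin (k+1)`):
a tree in which every vertex `v ≠ 0` has exactly one neighbor with a smaller
label, i.e. labels increase along every path moving away from the root `0`. -/
def IsIncreasingTree {k : ℕ} (G : SimpleGraph (Fin (k + 1))) : Prop :=
  G.IsTree ∧ ∀ v : Fin (k + 1), v ≠ 0 → ∃! w : Fin (k + 1), G.Adj v w ∧ w < v


lemma cw_mem {m k : ℕ} {A : ℕ → Finset ℕ} (h : IsCodeWord m k A) :
    ∀ i e, e ∈ A i → 2 ≤ e ∧ e ≤ i ∧ i ≤ k := by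
  obtain ⟨h1, h2, h3, h4, h5⟩ := h
  intro i
  induction i using Nat.strong_induction_on with
  | _ i ih =>
    intro e he
    have hik : 1 ≤ i ∧ i ≤ k := by
      by_contra hc
      push_neg at hc
      rcases Nat.lt_or_ge i 1 with h' | h'
      · rw [h5 i (Or.inl (by omega))] at he; simp at he
      · rw [h5 i (Or.inr (hc h'))] at he; simp at he
    refine ⟨h2 i hik.1 hik.2 e he, ?_, hik.2⟩
    by_cases hi1 : i = 1
    · rw [hi1, h1] at he; simp at he
    · have hi2 : 2 ≤ i := by omega
      rcases Finset.mem_union.mp (h3 i hi2 hik.2 he) with h' | h'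
      · have := ih (i - 1) (by omega) e h'
        omega
      · simp at h'; omega

lemma cw_interval {m k : ℕ} {A : ℕ → Finset ℕ} (h : IsCodeWord m k A) :
    ∀ i e i', e ∈ A i → e ≤ i' → i' ≤ i → e ∈ A i' := by
  intro i
  induction i using Nat.strong_induction_on with
  | _ i ih =>
    intro e i' he h1 h2
    rcases eq_or_lt_of_le h2 with rfl | hlt
    · exact he
    · have hm := cw_mem h i e he
      have hi2 : 2 ≤ i := by omega
      rcases Finset.mem_union.mp (h.2.2.1 i hi2 hm.2.2 he) with h' | h'
      · exact ih (i - 1) (by omega) e i' h' h1 (by omega)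
      · simp at h'; omega

lemma cw_presence {m k : ℕ} {A : ℕ → Finset ℕ} (h : IsCodeWord m k A)
    (e : ℕ) (he2 : 2 ≤ e) (i : ℕ) :
    e ∈ A i ↔ e ≤ i ∧ i ≤ e - 1 + multCW k A e := by
  classical
  set S := (Finset.Icc 1 k).filter (fun i => e ∈ A i) with hS
  have hmemS : ∀ i, e ∈ A i ↔ i ∈ S := by
    intro i
    constructor
    · intro hi
      have := cw_mem h i e hi
      exact Finset.mem_filter.mpr ⟨Finset.mem_Icc.mpr ⟨by omega, this.2.2⟩, hi⟩
    · intro hi; exact (Finset.mem_filter.mp hi).2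
  have hcard : multCW k A e = S.card := rfl
  rcases Finset.eq_empty_or_nonempty S with hemp | hne
  · rw [hemp] at hcard
    simp only [Finset.card_empty] at hcard
    rw [hcard]
    constructor
    · intro hi; rw [hmemS, hemp] at hi; simp at hi
    · intro hi; omega
  · set M := S.max' hne with hM
    have hMS : M ∈ S := S.max'_mem hne
    have hMA : e ∈ A M := (hmemS M).mpr hMS
    have hSeq : S = Finset.Icc e M := by
      ext i
      simp only [Finset.mem_Icc]
      constructor
      · intro hi
        have := cw_mem h i e ((hmemS i).mpr hi)
        exact ⟨this.2.1, S.le_max' i hi⟩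
      · intro hi
        exact (hmemS i).mp (cw_interval h M e i hMA hi.1 hi.2)
    have hMe : e ≤ M := (cw_mem h M e hMA).2.1
    have : S.card = M + 1 - e := by rw [hSeq, Nat.card_Icc]
    rw [hcard, this]
    rw [hmemS, hSeq, Finset.mem_Icc]
    omega

lemma cw_mult_le {m k : ℕ} {A : ℕ → Finset ℕ} (h : IsCodeWord m k A)
    (e : ℕ) (he2 : 2 ≤ e) : multCW k A e ≤ k + 1 - e := by
  have hsub : (Finset.Icc 1 k).filter (fun i => e ∈ A i) ⊆ Finset.Icc e k := by
    intro i hi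
    have := cw_mem h i e (Finset.mem_filter.mp hi).2
    exact Finset.mem_Icc.mpr ⟨this.2.1, this.2.2⟩
  calc multCW k A e ≤ (Finset.Icc e k).card := Finset.card_le_card hsub
    _ = k + 1 - e := Nat.card_Icc e k

open Finset

section
variable (k : ℕ)

/-- Code word built from death-time data `δ : ℕ → ℕ`, where element `e`
is present in `A i` iff `e ≤ i ≤ e - 1 + δ e`. -/
def bset (δ : ℕ → ℕ) (i : ℕ) : Finset ℕ :=
  if 1 ≤ i ∧ i ≤ k then (Finset.Icc 2 k).filter (fun e => e ≤ i ∧ i ≤ e - 1 + δ e) else ∅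

lemma mem_bset {δ : ℕ → ℕ} {i e : ℕ} :
    e ∈ bset k δ i ↔ (1 ≤ i ∧ i ≤ k) ∧ (2 ≤ e ∧ e ≤ k) ∧ e ≤ i ∧ i ≤ e - 1 + δ e := by
  unfold bset
  split
  · simp only [Finset.mem_filter, Finset.mem_Icc]; tauto
  · simp only [Finset.notMem_empty, false_iff]; tauto

lemma bset_isCodeWord (m : ℕ) (hm : 2 ≤ m) (hkm : k ≤ m) (δ : ℕ → ℕ) :
    IsCodeWord m k (bset k δ) := by
  refine ⟨?_, ?_, ?_, ?_, ?_⟩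
  · ext e; rw [mem_bset]; simp only [Finset.notMem_empty, iff_false]; omega
  · intro i _ _ x hx; exact ((mem_bset k).mp hx).2.1.1
  · intro j hj hjk e he
    rw [mem_bset] at he
    rcases eq_or_lt_of_le he.2.2.1 with rfl | hlt
    · exact Finset.mem_union_right _ (Finset.mem_singleton_self _)
    · refine Finset.mem_union_left _ ?_
      rw [mem_bset]
      omega
  · intro i hi hik
    have : bset k δ i ⊆ Finset.Icc 2 i := by
      intro e he; rw [mem_bset] at he; exact Finset.mem_Icc.mpr ⟨he.2.1.1, he.2.2.1⟩
    calc (bset k δ i).card ≤ (Finset.Icc 2 i).card := Finset.card_le_card this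
      _ = i + 1 - 2 := Nat.card_Icc 2 i
      _ ≤ m - 1 := by omega
  · intro i hi
    ext e; rw [mem_bset]; simp only [Finset.notMem_empty, iff_false]; omega

/-- `δ` extracted from a dependent death vector. -/
def deltaOf (d : ∀ j : Fin (k - 1), Fin (k - (j : ℕ))) (e : ℕ) : ℕ :=
  if h : e - 2 < k - 1 then (d ⟨e - 2, h⟩ : ℕ) else 0

/-- The first equivalence: code words ≃ death vectors. -/
noncomputable def cwEquiv (m : ℕ) (hm : 2 ≤ m) (hk1 : 1 ≤ k) (hkm : k ≤ m) :
    {A : ℕ → Finset ℕ | IsCodeWord m k A} ≃ (∀ j : Fin (k - 1), Fin (k - (j : ℕ))) where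
  toFun A j := ⟨multCW k A.1 ((j : ℕ) + 2), by
      have hj := j.2
      have := cw_mult_le A.2 ((j : ℕ) + 2) (by omega)
      omega⟩
  invFun d := ⟨bset k (deltaOf k d), bset_isCodeWord k m hm hkm (deltaOf k d)⟩
  left_inv := by
    rintro ⟨A, hA⟩
    ext i e : 3
    simp only [mem_bset]
    constructor
    · rintro ⟨hik, hek, hei⟩
      have hd : deltaOf k (fun j => (⟨multCW k A ((j : ℕ) + 2), by
          have hj := j.2
          have := cw_mult_le hA ((j : ℕ) + 2) (by omega)
          omega⟩ : Fin (k - (j : ℕ)))) e = multCW k A e := by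
        unfold deltaOf
        rw [dif_pos (show e - 2 < k - 1 by omega)]
        show multCW k A (e - 2 + 2) = multCW k A e
        congr 1
        omega
      rw [hd] at hei
      exact (cw_presence hA e hek.1 i).mpr hei
    · intro he
      have h1 := cw_mem hA i e he
      have h2 := (cw_presence hA e h1.1 i).mp he
      have hek : e ≤ k := le_trans h1.2.1 h1.2.2
      have hd : deltaOf k (fun j => (⟨multCW k A ((j : ℕ) + 2), by
          have hj := j.2
          have := cw_mult_le hA ((j : ℕ) + 2) (by omega)
          omega⟩ : Fin (k - (j : ℕ)))) e = multCW k A e := by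
        unfold deltaOf
        rw [dif_pos (show e - 2 < k - 1 by omega)]
        show multCW k A (e - 2 + 2) = multCW k A e
        congr 1
        omega
      rw [hd]
      exact ⟨⟨by omega, h1.2.2⟩, ⟨h1.1, hek⟩, h2⟩
  right_inv := by
    intro d
    funext j
    apply Fin.ext
    simp only []
    have hj := j.2
    have hdelta : deltaOf k d ((j : ℕ) + 2) = (d j : ℕ) := by
      unfold deltaOf
      rw [dif_pos (show (j : ℕ) + 2 - 2 < k - 1 by omega)]
      rfl
    have hdj : (d j : ℕ) ≤ k - (j : ℕ) - 1 := by have := (d j).2; omega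
    unfold multCW
    have : (Finset.Icc 1 k).filter (fun i => (j : ℕ) + 2 ∈ bset k (deltaOf k d) i)
        = Finset.Icc ((j : ℕ) + 2) ((j : ℕ) + 1 + (d j : ℕ)) := by
      ext i
      simp only [Finset.mem_filter, Finset.mem_Icc, mem_bset, hdelta]
      omega
    rw [this, Nat.card_Icc]
    omega
end


section Trees
variable {k : ℕ}

/-- Parent function on `Fin (k+1)` from a vector `p`. -/
def parOf (p : ∀ v : Fin k, Fin ((v : ℕ) + 1)) (v : Fin (k + 1)) : Fin (k + 1) :=
  if h : (v : ℕ) = 0 then 0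
  else ⟨(p ⟨(v : ℕ) - 1, by omega⟩ : ℕ), by
    have := (p ⟨(v : ℕ) - 1, by omega⟩).2
    omega⟩

lemma parOf_lt (p : ∀ v : Fin k, Fin ((v : ℕ) + 1)) {v : Fin (k + 1)} (hv : v ≠ 0) :
    parOf p v < v := by
  have hv' : (v : ℕ) ≠ 0 := fun h => hv (Fin.ext h)
  rw [Fin.lt_def, parOf, dif_neg hv']
  have h2 := (p ⟨(v : ℕ) - 1, by omega⟩).2
  simp only [Fin.val_mk] at h2 ⊢
  omega

/-- The graph built from a parent vector. -/
def graphOf (p : ∀ v : Fin k, Fin ((v : ℕ) + 1)) : SimpleGraph (Fin (k + 1)) :=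
  SimpleGraph.fromRel (fun a b => a ≠ 0 ∧ parOf p a = b)

lemma graphOf_adj {p : ∀ v : Fin k, Fin ((v : ℕ) + 1)} {a b : Fin (k + 1)} :
    (graphOf p).Adj a b ↔ a ≠ b ∧ ((a ≠ 0 ∧ parOf p a = b) ∨ (b ≠ 0 ∧ parOf p b = a)) := by
  rw [graphOf, SimpleGraph.fromRel_adj]

lemma graphOf_adj_parOf (p : ∀ v : Fin k, Fin ((v : ℕ) + 1)) {v : Fin (k + 1)} (hv : v ≠ 0) :
    (graphOf p).Adj v (parOf p v) :=
  graphOf_adj.mpr ⟨(parOf_lt p hv).ne', Or.inl ⟨hv, rfl⟩⟩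

lemma graphOf_smaller_eq {p : ∀ v : Fin k, Fin ((v : ℕ) + 1)} {v w : Fin (k + 1)}
    (h : (graphOf p).Adj v w) (hw : w < v) : w = parOf p v := by
  rcases graphOf_adj.mp h with ⟨hne, ⟨hv0, hp⟩ | ⟨hw0, hp⟩⟩
  · exact hp.symm
  · exact absurd (hp ▸ parOf_lt p hw0) (by intro h'; exact absurd (h'.trans hw) (lt_irrefl _))

lemma graphOf_reachable (p : ∀ v : Fin k, Fin ((v : ℕ) + 1)) (v : Fin (k + 1)) :
    (graphOf p).Reachable v 0 := by
  suffices H : ∀ n (v : Fin (k + 1)), (v : ℕ) = n → (graphOf p).Reachable v 0 by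
    exact H (v : ℕ) v rfl
  intro n
  induction n using Nat.strong_induction_on with
  | _ n ih =>
    intro v hv
    by_cases hv0 : v = 0
    · rw [hv0]
    · have hlt : ((parOf p v : Fin (k + 1)) : ℕ) < n := hv ▸ (parOf_lt p hv0)
      exact ((graphOf_adj_parOf p hv0).toWalk.reachable).trans
        (ih _ hlt (parOf p v) rfl)

lemma graphOf_connected (p : ∀ v : Fin k, Fin ((v : ℕ) + 1)) : (graphOf p).Connected := by
  rw [SimpleGraph.connected_iff]
  exact ⟨fun u v => (graphOf_reachable p u).trans (graphOf_reachable p v).symm,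
    ⟨0⟩⟩

lemma graphOf_acyclic (p : ∀ v : Fin k, Fin ((v : ℕ) + 1)) : (graphOf p).IsAcyclic := by
  intro u c hc
  -- take the vertex of max value in the support
  classical
  obtain ⟨M, hMs, hMmax⟩ := (c.support.toFinset.exists_max_image (fun x => (x : ℕ))
    ⟨u, by simp [SimpleGraph.Walk.start_mem_support]⟩)
  rw [List.mem_toFinset] at hMs
  have hMmax' : ∀ x ∈ c.support, (x : ℕ) ≤ (M : ℕ) := fun x hx =>
    hMmax x (List.mem_toFinset.mpr hx)
  -- rotate the cycle to start at M
  set c' := c.rotate M hMs with hc'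
  have hcyc : c'.IsCycle := hc.rotate hMs
  have hsupp : ∀ x ∈ c'.support, (x : ℕ) ≤ (M : ℕ) := by
    intro x hx
    rcases List.mem_cons.mp (c'.support_eq_cons ▸ hx) with rfl | hx'
    · exact le_refl _
    · exact hMmax' x (List.mem_of_mem_tail
        (((SimpleGraph.Walk.support_rotate c M hMs).mem_iff).mp hx'))
  clear_value c'
  clear hc' hc hMmax hMmax' hMs
  cases c' with
  | nil => exact hcyc.ne_nil rfl
  | @cons _ b _ h q =>
    have hbM : b < M := by
      have hb : (b : ℕ) ≤ (M : ℕ) := hsupp b (by simp)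
      have : b ≠ M := h.ne'
      rw [Fin.lt_def]
      rcases lt_or_eq_of_le hb with h' | h'
      · exact h'
      · exact absurd (Fin.ext h') this
    have hM0 : M ≠ 0 := by
      intro h0
      rw [h0] at hbM
      exact absurd hbM (Fin.not_lt_zero b)
    have hb_par : b = parOf p M := graphOf_smaller_eq h hbM
    -- now look at the reverse of q
    obtain ⟨z, h2, r, hqr⟩ := SimpleGraph.Walk.not_nil_iff.mp
      (SimpleGraph.Walk.not_nil_of_ne h.ne : ¬ q.reverse.Nil)
    have hz_mem : z ∈ q.support := by
      have : z ∈ q.reverse.support := by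
        rw [hqr, SimpleGraph.Walk.support_cons]
        exact List.mem_cons_of_mem _ r.start_mem_support
      rwa [SimpleGraph.Walk.support_reverse, List.mem_reverse] at this
    have hzM : z < M := by
      have hz : (z : ℕ) ≤ (M : ℕ) := hsupp z (by
        rw [SimpleGraph.Walk.support_cons]
        exact List.mem_cons_of_mem _ hz_mem)
      have hne : z ≠ M := h2.ne'
      rw [Fin.lt_def]
      rcases lt_or_eq_of_le hz with h' | h'
      · exact h'
      · exact absurd (Fin.ext h') hne
    have hz_par : z = parOf p M := graphOf_smaller_eq h2 hzM
    have hedge : s(M, b) ∈ q.edges := by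
      have : s(M, z) ∈ q.reverse.edges := by
        rw [hqr, SimpleGraph.Walk.edges_cons]
        exact List.mem_cons_self
      rw [SimpleGraph.Walk.edges_reverse, List.mem_reverse] at this
      rwa [hz_par, ← hb_par] at this
    have hnodup : ((SimpleGraph.Walk.cons h q).edges).Nodup := hcyc.edges_nodup
    rw [SimpleGraph.Walk.edges_cons, List.nodup_cons] at hnodup
    exact hnodup.1 hedge
end Trees


section Trees2
variable {k : ℕ}

lemma graphOf_increasing (p : ∀ v : Fin k, Fin ((v : ℕ) + 1)) :
    IsIncreasingTree (graphOf p) := by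
  refine ⟨⟨graphOf_connected p, graphOf_acyclic p⟩, fun v hv => ?_⟩
  exact ⟨parOf p v, ⟨graphOf_adj_parOf p hv, parOf_lt p hv⟩,
    fun w hw => graphOf_smaller_eq hw.1 hw.2⟩

/-- Extract the parent vector from an increasing tree. -/
noncomputable def extractP (G : SimpleGraph (Fin (k + 1))) (hG : IsIncreasingTree G)
    (v : Fin k) : Fin ((v : ℕ) + 1) :=
  ⟨((hG.2 ⟨(v : ℕ) + 1, by omega⟩ (by
      intro h
      have := congrArg Fin.val h
      simp at this)).choose : ℕ), by
    have hs := (hG.2 ⟨(v : ℕ) + 1, by omega⟩ (by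
      intro h
      have := congrArg Fin.val h
      simp at this)).choose_spec.1.2
    rw [Fin.lt_def] at hs
    simpa using hs⟩

lemma extract_spec (G : SimpleGraph (Fin (k + 1))) (hG : IsIncreasingTree G)
    (u : Fin (k + 1)) (hu : u ≠ 0) :
    G.Adj u (parOf (extractP G hG) u) ∧ parOf (extractP G hG) u < u := by
  have hu' : (u : ℕ) ≠ 0 := fun h => hu (Fin.ext h)
  have hne : (⟨((u : ℕ) - 1) + 1, by omega⟩ : Fin (k + 1)) ≠ 0 := by
    intro h
    have := congrArg Fin.val h
    simp at this
  have key : ∀ (w : Fin (k + 1)) (hw : w ≠ 0), w = u →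
      G.Adj u ((hG.2 w hw).choose) ∧ (hG.2 w hw).choose < u := by
    rintro w hw rfl
    exact (hG.2 w hw).choose_spec.1
  have hw1 : (⟨((u : ℕ) - 1) + 1, by omega⟩ : Fin (k + 1)) = u := Fin.ext (by simp; omega)
  have spec := key ⟨((u : ℕ) - 1) + 1, by omega⟩ hne hw1
  rw [parOf, dif_neg hu']
  exact spec

/-- The second equivalence: parent vectors ≃ increasing trees. -/
noncomputable def treeEquiv (k : ℕ) :
    (∀ v : Fin k, Fin ((v : ℕ) + 1)) ≃
      {G : SimpleGraph (Fin (k + 1)) | IsIncreasingTree G} where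
  toFun p := ⟨graphOf p, graphOf_increasing p⟩
  invFun G := extractP G.1 G.2
  left_inv p := by
    funext v
    have hne : (⟨(v : ℕ) + 1, by omega⟩ : Fin (k + 1)) ≠ 0 := by
      intro h
      have := congrArg Fin.val h
      simp at this
    have spec := ((graphOf_increasing p).2 ⟨(v : ℕ) + 1, by omega⟩ hne).choose_spec.1
    have hpar := graphOf_smaller_eq spec.1 spec.2
    apply Fin.ext
    show ((((graphOf_increasing p).2 ⟨(v : ℕ) + 1, by omega⟩ hne).choose : Fin (k+1)) : ℕ)
      = ((p v : ℕ))
    rw [hpar, parOf, dif_neg (by simp : ((⟨(v : ℕ) + 1, by omega⟩ : Fin (k+1)) : ℕ) ≠ 0)]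
    rfl
  right_inv := by
    rintro ⟨G, hG⟩
    apply Subtype.ext
    show graphOf (extractP G hG) = G
    ext a b
    rw [graphOf_adj]
    constructor
    · rintro ⟨hne, ⟨ha0, hp⟩ | ⟨hb0, hp⟩⟩
      · exact hp ▸ (extract_spec G hG a ha0).1
      · exact (hp ▸ (extract_spec G hG b hb0).1).symm
    · intro hadj
      refine ⟨hadj.ne, ?_⟩
      rcases lt_or_gt_of_ne hadj.ne with hlt | hlt
      · -- a < b : b is the larger, a = parent of b
        have hb0 : b ≠ 0 := by
          intro h
          rw [h] at hlt
          exact absurd hlt (Fin.not_lt_zero a)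
        exact Or.inr ⟨hb0, ((hG.2 b hb0).unique
          ⟨(extract_spec G hG b hb0).1, (extract_spec G hG b hb0).2⟩
          ⟨hadj.symm, hlt⟩).symm ▸ rfl⟩
      · have ha0 : a ≠ 0 := by
          intro h
          rw [h] at hlt
          exact absurd hlt (Fin.not_lt_zero b)
        exact Or.inl ⟨ha0, ((hG.2 a ha0).unique
          ⟨(extract_spec G hG a ha0).1, (extract_spec G hG a ha0).2⟩
          ⟨hadj, hlt⟩).symm ▸ rfl⟩
end Trees2

lemma prod_add_two (n : ℕ) : (∏ j ∈ Finset.range n, (j + 2)) = (n + 1).factorial := by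
  induction n with
  | zero => simp
  | succ n ih =>
    rw [Finset.prod_range_succ, ih]
    conv_rhs => rw [Nat.factorial_succ]
    ring

/-- For `1 ≤ k ≤ m`, there is a bijection between the set of code words of
length `k` over base dimension `m` and the set of increasing trees on the
vertex set `{0, 1, …, k}`. -/
theorem codeWords_equiv_increasingTrees (m k : ℕ) (hm : 2 ≤ m) (hk1 : 1 ≤ k)
    (hkm : k ≤ m) :
    Nonempty ({A : ℕ → Finset ℕ | IsCodeWord m k A} ≃
      {G : SimpleGraph (Fin (k + 1)) | IsIncreasingTree G}) := by
  have hcard : Fintype.card (∀ j : Fin (k - 1), Fin (k - (j : ℕ)))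
      = Fintype.card (∀ v : Fin k, Fin ((v : ℕ) + 1)) := by
    rw [Fintype.card_pi, Fintype.card_pi]
    simp only [Fintype.card_fin]
    rw [Fin.prod_univ_eq_prod_range (fun j => k - j) (k - 1),
      Fin.prod_univ_eq_prod_range (fun v => v + 1) k,
      Finset.prod_range_add_one_eq_factorial]
    obtain ⟨n, rfl⟩ : ∃ n, k = n + 1 := ⟨k - 1, by omega⟩
    simp only [Nat.add_sub_cancel]
    rw [← Finset.prod_range_reflect (fun j => n + 1 - j) n]
    rw [← prod_add_two n]
    apply Finset.prod_congr rfl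
    intro j hj
    rw [Finset.mem_range] at hj
    omega
  exact ⟨((cwEquiv k m hm hk1 hkm).trans (Fintype.equivOfCardEq hcard)).trans (treeEquiv k)⟩
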